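/- arXiv:1006.5551 — 8 statements merged into one kernel-verified Lean document; each statement's English description precedes it below -/
import Mathlib

section
/- Let B be a closed Euclidean ball in ℝⁿ with center c_B satisfying r_B ≤ min(1, 1/|c_B|) (an admissible ball). If x ∈ ℝⁿ is such that the ball B(x, min(1, 1/|x|)) intersects B, then |x - c_B| ≤ 4·min(1, 1/|c_B|). -/
/-- `mrad t = min(1, 1/t)` with the convention that it equals `1` when `t ≤ 1`
(in particular for a ball centred at the origin). -/
noncomputable def mrad (t : ℝ) : ℝ := if t ≤ 1 then 1 else 1 / t

theorem stmt_2 (n : ℕ) (cB x : EuclideanSpace ℝ (Fin n)) (rB : ℝ)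
    (hr : rB ≤ mrad ‖cB‖)
    (h : (Metric.closedBall x (mrad ‖x‖) ∩ Metric.closedBall cB rB).Nonempty) :
    ‖x - cB‖ ≤ 4 * mrad ‖cB‖ := by
  obtain ⟨y, hy1, hy2⟩ := h
  rw [Metric.mem_closedBall, dist_eq_norm] at hy1 hy2
  have h1 : ‖x - y‖ ≤ mrad ‖x‖ := by rwa [norm_sub_rev]
  have h2 : ‖y - cB‖ ≤ rB := hy2
  have hd : ‖x - cB‖ ≤ mrad ‖x‖ + mrad ‖cB‖ := by
    calc ‖x - cB‖ = ‖(x - y) + (y - cB)‖ := by rw [sub_add_sub_cancel]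
      _ ≤ ‖x - y‖ + ‖y - cB‖ := norm_add_le _ _
      _ ≤ mrad ‖x‖ + mrad ‖cB‖ := by linarith
  have hb : ‖cB‖ ≤ ‖x‖ + ‖x - cB‖ := by
    have := norm_sub_norm_le cB x
    rw [norm_sub_rev] at this
    linarith
  have hx0 : (0:ℝ) ≤ ‖x‖ := norm_nonneg _
  have hc0 : (0:ℝ) ≤ ‖cB‖ := norm_nonneg _
  unfold mrad at hd ⊢
  split_ifs at hd ⊢ with hcb hx hx
  · linarith
  · have hx1 : (1:ℝ) < ‖x‖ := not_le.mp hx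
    have hix : 1 / ‖x‖ ≤ 1 := by rw [div_le_one (by linarith)]; linarith
    linarith
  · -- ‖cB‖ > 1, ‖x‖ ≤ 1
    have hc1 : (1:ℝ) < ‖cB‖ := by linarith [not_le.mp hcb]
    have hcpos : (0:ℝ) < ‖cB‖ := by linarith
    have hinv : 1 / ‖cB‖ ≤ 1 := by
      rw [div_le_one hcpos]; linarith
    have hc3 : ‖cB‖ ≤ 3 := by nlinarith
    have hgoal : 4 * (1/‖cB‖) = 4 / ‖cB‖ := by ring
    rw [hgoal, le_div_iff₀ hcpos]
    have hcc : 1 / ‖cB‖ * ‖cB‖ = 1 := by field_simp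
    nlinarith [mul_le_mul_of_nonneg_right hd hc0]
  · -- ‖cB‖ > 1, ‖x‖ > 1
    have hc1 : (1:ℝ) < ‖cB‖ := not_le.mp hcb
    have hx1 : (1:ℝ) < ‖x‖ := not_le.mp hx
    have hcpos : (0:ℝ) < ‖cB‖ := by linarith
    have hxpos : (0:ℝ) < ‖x‖ := by linarith
    have hix : 1 / ‖x‖ ≤ 1 := by rw [div_le_one hxpos]; linarith
    have hic : 1 / ‖cB‖ ≤ 1 := by rw [div_le_one hcpos]; linarith
    -- d ≤ 1/‖x‖ + 1/‖cB‖, need d ≤ 4/‖cB‖ i.e. ‖cB‖ ≤ 3‖x‖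
    have hb3 : ‖cB‖ ≤ 3 * ‖x‖ := by
      have : ‖x - cB‖ ≤ 2 := by linarith
      linarith
    have hgoal : 4 * (1/‖cB‖) = 4 / ‖cB‖ := by ring
    rw [hgoal, le_div_iff₀ hcpos]
    have h4 : ‖x - cB‖ * ‖cB‖ ≤ (1 / ‖x‖ + 1 / ‖cB‖) * ‖cB‖ :=
      mul_le_mul_of_nonneg_right hd hc0
    have hxx : 1 / ‖x‖ * ‖cB‖ ≤ 3 := by
      rw [div_mul_eq_mul_div, div_le_iff₀ hxpos]; linarith
    have hcc : 1 / ‖cB‖ * ‖cB‖ = 1 := by field_simp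
    nlinarith
end

section
/- For every s > 0 there exists a constant C(s) ≥ 1 such that for every ball B in ℝⁿ admissible at scale s (i.e., r_B ≤ s·min(1, 1/|c_B|)) and every measurable subset E of B, one has C(s)⁻¹·γ(E) ≤ γ₀(c_B)·λ(E) ≤ C(s)·γ(E), where γ₀(x) = π^{-n/2} e^{-|x|²} is the Gaussian density, γ is the Gaussian measure, and λ is Lebesgue measure. -/
open MeasureTheory
open scoped ENNReal

/-- Gaussian density `γ₀(x) = π^{-n/2} e^{-|x|²}` on ℝⁿ. -/
noncomputable def gaussDensity (n : ℕ) (x : EuclideanSpace ℝ (Fin n)) : ℝ :=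
  Real.pi ^ (-(n : ℝ) / 2) * Real.exp (-‖x‖ ^ 2)

/-- The Gauss measure `γ` on ℝⁿ. -/
noncomputable def gaussMeasure (n : ℕ) : Measure (EuclideanSpace ℝ (Fin n)) :=
  volume.withDensity fun x => ENNReal.ofReal (gaussDensity n x)

lemma gaussDensity_pos (n : ℕ) (x : EuclideanSpace ℝ (Fin n)) : 0 < gaussDensity n x := by
  unfold gaussDensity
  positivity

lemma gaussDensity_cont (n : ℕ) : Continuous (gaussDensity n) := by
  unfold gaussDensity
  fun_prop

theorem stmt_3 (n : ℕ) (s : ℝ) (hs : 0 < s) :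
    ∃ C : ℝ≥0∞, 1 ≤ C ∧ C ≠ ⊤ ∧
      ∀ (cB : EuclideanSpace ℝ (Fin n)) (rB : ℝ), 0 < rB → rB ≤ s * mrad ‖cB‖ →
        ∀ E ⊆ Metric.closedBall cB rB, MeasurableSet E →
          C⁻¹ * gaussMeasure n E ≤ ENNReal.ofReal (gaussDensity n cB) * volume E ∧
          ENNReal.ofReal (gaussDensity n cB) * volume E ≤ C * gaussMeasure n E := by
  set K : ℝ := 2 * s + s ^ 2 with hK
  have hK0 : 0 ≤ K := by positivity
  refine ⟨ENNReal.ofReal (Real.exp K), ?_, ENNReal.ofReal_ne_top, ?_⟩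
  · rw [show (1 : ℝ≥0∞) = ENNReal.ofReal 1 by simp]
    exact ENNReal.ofReal_le_ofReal (by simpa using Real.exp_le_exp.2 hK0)
  intro cB rB hr hradm E hE hEm
  -- basic bounds on rB
  have hmrad01 : 0 < mrad ‖cB‖ ∧ mrad ‖cB‖ ≤ 1 ∧ ‖cB‖ * mrad ‖cB‖ ≤ 1 := by
    unfold mrad
    split_ifs with h
    · refine ⟨one_pos, le_refl _, by simpa using h⟩
    · push_neg at h
      have h0 : 0 < ‖cB‖ := lt_trans one_pos h
      exact ⟨by positivity, by rw [div_le_one h0]; linarith, by field_simp; exact le_rfl⟩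
  have hrs : rB ≤ s := le_trans hradm (by nlinarith [hmrad01.1, hmrad01.2.1])
  have hrc : rB * ‖cB‖ ≤ s := by
    calc rB * ‖cB‖ ≤ s * mrad ‖cB‖ * ‖cB‖ := by
          exact mul_le_mul_of_nonneg_right hradm (norm_nonneg _)
      _ ≤ s := by nlinarith [hmrad01.2.2, hs]
  -- pointwise density comparison on the ball
  have key : ∀ x ∈ Metric.closedBall cB rB,
      gaussDensity n x ≤ Real.exp K * gaussDensity n cB ∧
      gaussDensity n cB ≤ Real.exp K * gaussDensity n x := by
    intro x hx
    have hd : ‖x - cB‖ ≤ rB := by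
      simpa [dist_eq_norm] using Metric.mem_closedBall.1 hx
    have h1 : |‖x‖ - ‖cB‖| ≤ rB := le_trans (abs_norm_sub_norm_le x cB) hd
    have h2 : |‖x‖ ^ 2 - ‖cB‖ ^ 2| ≤ K := by
      have h3 : ‖x‖ ≤ ‖cB‖ + rB := by
        have := abs_le.1 h1; linarith [this.1, this.2]
      rw [abs_le] at h1 ⊢
      constructor <;> nlinarith [norm_nonneg x, norm_nonneg cB, h1.1, h1.2, hrs, hrc, hr]
    rw [abs_le] at h2
    constructor
    · unfold gaussDensity
      rw [show Real.exp K * (Real.pi ^ (-(n:ℝ)/2) * Real.exp (-‖cB‖ ^ 2))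
          = Real.pi ^ (-(n:ℝ)/2) * (Real.exp K * Real.exp (-‖cB‖ ^ 2)) by ring,
        ← Real.exp_add]
      have hπ : (0:ℝ) < Real.pi ^ (-(n:ℝ)/2) := Real.rpow_pos_of_pos Real.pi_pos _
      exact mul_le_mul_of_nonneg_left (Real.exp_le_exp.2 (by linarith [h2.1])) hπ.le
    · unfold gaussDensity
      rw [show Real.exp K * (Real.pi ^ (-(n:ℝ)/2) * Real.exp (-‖x‖ ^ 2))
          = Real.pi ^ (-(n:ℝ)/2) * (Real.exp K * Real.exp (-‖x‖ ^ 2)) by ring,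
        ← Real.exp_add]
      have hπ : (0:ℝ) < Real.pi ^ (-(n:ℝ)/2) := Real.rpow_pos_of_pos Real.pi_pos _
      exact mul_le_mul_of_nonneg_left (Real.exp_le_exp.2 (by linarith [h2.2])) hπ.le
  have hmeas : Measurable fun x : EuclideanSpace ℝ (Fin n) => ENNReal.ofReal (gaussDensity n x) :=
    (ENNReal.measurable_ofReal.comp (gaussDensity_cont n).measurable)
  have hγE : gaussMeasure n E = ∫⁻ x in E, ENNReal.ofReal (gaussDensity n x) := by
    rw [gaussMeasure, withDensity_apply _ hEm]
  -- upper bound: γ E ≤ exp K * gcB * vol E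
  have hup : gaussMeasure n E ≤ ENNReal.ofReal (Real.exp K)
      * (ENNReal.ofReal (gaussDensity n cB) * volume E) := by
    rw [hγE]
    calc ∫⁻ x in E, ENNReal.ofReal (gaussDensity n x)
        ≤ ∫⁻ _ in E, ENNReal.ofReal (Real.exp K * gaussDensity n cB) := by
          refine setLIntegral_mono measurable_const fun x hxE => ?_
          exact ENNReal.ofReal_le_ofReal (key x (hE hxE)).1
      _ = ENNReal.ofReal (Real.exp K) * (ENNReal.ofReal (gaussDensity n cB) * volume E) := by
          rw [setLIntegral_const, ENNReal.ofReal_mul (Real.exp_pos K).le, mul_assoc]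
  -- lower bound: gcB * vol E ≤ exp K * γ E
  have hlow : ENNReal.ofReal (gaussDensity n cB) * volume E
      ≤ ENNReal.ofReal (Real.exp K) * gaussMeasure n E := by
    have : (∫⁻ _ in E, ENNReal.ofReal (gaussDensity n cB))
        ≤ ∫⁻ x in E, ENNReal.ofReal (Real.exp K) * ENNReal.ofReal (gaussDensity n x) := by
      refine setLIntegral_mono (by fun_prop) fun x hxE => ?_
      rw [← ENNReal.ofReal_mul (Real.exp_pos K).le]
      exact ENNReal.ofReal_le_ofReal (key x (hE hxE)).2
    rw [setLIntegral_const] at this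
    rwa [lintegral_const_mul _ hmeas, ← hγE] at this
  have hC0 : ENNReal.ofReal (Real.exp K) ≠ 0 := by
    simp [ENNReal.ofReal_eq_zero, not_le, Real.exp_pos]
  refine ⟨?_, hlow⟩
  calc (ENNReal.ofReal (Real.exp K))⁻¹ * gaussMeasure n E
      ≤ (ENNReal.ofReal (Real.exp K))⁻¹ * (ENNReal.ofReal (Real.exp K)
        * (ENNReal.ofReal (gaussDensity n cB) * volume E)) :=
        mul_le_mul_right hup _
    _ = ENNReal.ofReal (gaussDensity n cB) * volume E := by
        rw [← mul_assoc, ENNReal.inv_mul_cancel hC0 ENNReal.ofReal_ne_top, one_mul]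
end

section
/- For every s > 0 there exists a constant C(s) such that the Gaussian measure is doubling on admissible balls at scale s: if B = B(c, r) with 2r ≤ s·min(1, 1/|c|), then γ(B(c, 2r)) ≤ C(s)·γ(B(c, r)). -/
open MeasureTheory
open scoped ENNReal

theorem stmt_4 (n : ℕ) (s : ℝ) (hs : 0 < s) :
    ∃ C : ℝ≥0∞, C ≠ ⊤ ∧
      ∀ (c : EuclideanSpace ℝ (Fin n)) (r : ℝ), 0 < r → 2 * r ≤ s * mrad ‖c‖ →
        gaussMeasure n (Metric.closedBall c (2 * r)) ≤
          C * gaussMeasure n (Metric.closedBall c r) := by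
  refine ⟨2 ^ n * ENNReal.ofReal (Real.exp (3 * s + 9 * s ^ 2 / 4)), ?_, ?_⟩
  · exact ENNReal.mul_ne_top (by simp) ENNReal.ofReal_ne_top
  intro c r hr hrs
  set t := ‖c‖ with ht
  have ht0 : 0 ≤ t := norm_nonneg c
  -- key real inequality
  have key : (t + r) ^ 2 - (max 0 (t - 2 * r)) ^ 2 ≤ 3 * s + 9 * s ^ 2 / 4 := by
    unfold mrad at hrs
    rcases le_or_gt (t - 2 * r) 0 with h | h
    · rw [max_eq_left h]
      have hr2 : 2 * r ≤ s := by
        split_ifs at hrs with h1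
        · linarith
        · have h1' : 1 < t := by linarith
          have hle : 1 / t ≤ 1 := by rw [div_le_one (by linarith)]; linarith
          nlinarith [mul_le_of_le_one_right hs.le hle]
      nlinarith
    · rw [max_eq_right h.le]
      split_ifs at hrs with h1
      · nlinarith
      · have h1' : 1 < t := by linarith
        have : 2 * r * t ≤ s := by
          rw [mul_one_div, le_div_iff₀ (by linarith)] at hrs
          linarith
        nlinarith
  -- pointwise density bounds
  set A : ℝ := Real.pi ^ (-(n : ℝ) / 2) * Real.exp (-(max 0 (t - 2 * r)) ^ 2) with hA
  set B : ℝ := Real.pi ^ (-(n : ℝ) / 2) * Real.exp (-(t + r) ^ 2) with hB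
  have hpi : (0:ℝ) < Real.pi ^ (-(n : ℝ) / 2) := Real.rpow_pos_of_pos Real.pi_pos _
  have hAB : A ≤ Real.exp (3 * s + 9 * s ^ 2 / 4) * B := by
    rw [hA, hB, mul_comm (Real.exp _), mul_assoc, ← Real.exp_add]
    have : Real.exp (-(max 0 (t - 2 * r)) ^ 2) ≤ Real.exp (-(t + r) ^ 2 + (3 * s + 9 * s ^ 2 / 4)) :=
      Real.exp_le_exp.2 (by linarith)
    nlinarith [this, hpi]
  have hmeasBig : MeasurableSet (Metric.closedBall c (2 * r)) := measurableSet_closedBall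
  have hmeasSmall : MeasurableSet (Metric.closedBall c r) := measurableSet_closedBall
  have hupper : gaussMeasure n (Metric.closedBall c (2 * r)) ≤
      ENNReal.ofReal A * volume (Metric.closedBall c (2 * r)) := by
    rw [gaussMeasure, withDensity_apply _ hmeasBig]
    calc ∫⁻ x in Metric.closedBall c (2 * r), ENNReal.ofReal (gaussDensity n x)
        ≤ ∫⁻ _ in Metric.closedBall c (2 * r), ENNReal.ofReal A := by
          refine setLIntegral_mono' hmeasBig fun x hx => ?_
          refine ENNReal.ofReal_le_ofReal ?_
          rw [gaussDensity, hA]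
          refine mul_le_mul_of_nonneg_left (Real.exp_le_exp.2 ?_) hpi.le
          have h1 : ‖x‖ ≥ max 0 (t - 2 * r) := by
            rw [Metric.mem_closedBall] at hx
            refine max_le (norm_nonneg x) ?_
            have hd : ‖c‖ - ‖x‖ ≤ dist x c := by
              rw [dist_comm, dist_eq_norm]; exact norm_sub_norm_le c x
            linarith
          have h2 : (max 0 (t - 2 * r)) ^ 2 ≤ ‖x‖ ^ 2 :=
            pow_le_pow_left₀ (le_max_left _ _) h1 2
          linarith
      _ = ENNReal.ofReal A * volume (Metric.closedBall c (2 * r)) := by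
          rw [setLIntegral_const]
  have hlower : ENNReal.ofReal B * volume (Metric.closedBall c r) ≤
      gaussMeasure n (Metric.closedBall c r) := by
    rw [gaussMeasure, withDensity_apply _ hmeasSmall, ← setLIntegral_const]
    refine setLIntegral_mono' hmeasSmall fun x hx => ?_
    refine ENNReal.ofReal_le_ofReal ?_
    rw [gaussDensity, hB]
    refine mul_le_mul_of_nonneg_left (Real.exp_le_exp.2 ?_) hpi.le
    have h1 : ‖x‖ ≤ t + r := by
      rw [Metric.mem_closedBall] at hx
      calc ‖x‖ = ‖x - c + c‖ := by rw [sub_add_cancel]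
        _ ≤ ‖x - c‖ + ‖c‖ := norm_add_le _ _
        _ ≤ r + t := by rw [← dist_eq_norm]; exact add_le_add hx le_rfl
        _ = t + r := by ring
    have h2 : ‖x‖ ^ 2 ≤ (t + r) ^ 2 := pow_le_pow_left₀ (norm_nonneg x) h1 2
    linarith
  -- volume scaling
  have hvol : volume (Metric.closedBall c (2 * r)) =
      2 ^ n * volume (Metric.closedBall c r) := by
    rw [Measure.addHaar_closedBall _ c (by linarith : (0:ℝ) ≤ 2 * r),
        Measure.addHaar_closedBall _ c hr.le, finrank_euclideanSpace_fin,
        mul_pow, ENNReal.ofReal_mul (by positivity), ← mul_assoc]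
    congr 2
    rw [ENNReal.ofReal_pow (by norm_num : (0:ℝ) ≤ 2)]
    norm_num
  calc gaussMeasure n (Metric.closedBall c (2 * r))
      ≤ ENNReal.ofReal A * volume (Metric.closedBall c (2 * r)) := hupper
    _ = ENNReal.ofReal A * (2 ^ n * volume (Metric.closedBall c r)) := by rw [hvol]
    _ ≤ ENNReal.ofReal (Real.exp (3 * s + 9 * s ^ 2 / 4) * B) *
        (2 ^ n * volume (Metric.closedBall c r)) := by
        exact mul_le_mul_left (ENNReal.ofReal_le_ofReal hAB) _
    _ = 2 ^ n * ENNReal.ofReal (Real.exp (3 * s + 9 * s ^ 2 / 4)) *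
        (ENNReal.ofReal B * volume (Metric.closedBall c r)) := by
        rw [ENNReal.ofReal_mul (Real.exp_pos _).le]; ring
    _ ≤ 2 ^ n * ENNReal.ofReal (Real.exp (3 * s + 9 * s ^ 2 / 4)) *
        gaussMeasure n (Metric.closedBall c r) := by gcongr
end

section
/- For y in an admissible ball B (center c_B, radius r_B ≤ min(1, 1/|c_B|)) in ℝⁿ, one has |1 - e^{(c_B - y)·(c_B + y)}| ≤ C·r_B·(1 + |c_B|) for a dimensional constant C. Equivalently, |e^{|c_B|²}(e^{-|c_B|²} - e^{-|y|²})| ≤ C·r_B·(1 + |c_B|). -/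
open MeasureTheory
open scoped ENNReal

lemma exp_sub_one_bound (t : ℝ) (ht : |t| ≤ 3) : |1 - Real.exp t| ≤ Real.exp 3 * |t| := by
  rcases le_or_gt t 0 with h | h
  · have h1 : Real.exp t ≤ 1 := Real.exp_le_one_iff.mpr h
    have h2 : 1 - Real.exp t ≤ -t := by nlinarith [Real.add_one_le_exp t]
    have : |1 - Real.exp t| = 1 - Real.exp t := abs_of_nonneg (by linarith)
    rw [this, abs_of_nonpos h]
    nlinarith [Real.one_le_exp (by norm_num : (0:ℝ) ≤ 3)]
  · have h1 : 1 ≤ Real.exp t := Real.one_le_exp h.le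
    have h2 : Real.exp t - 1 ≤ t * Real.exp t := by
      have h0 := Real.exp_pos t
      have ha := Real.add_one_le_exp (-t)
      rw [Real.exp_neg] at ha
      have hb : (1 - t) ≤ 1 / Real.exp t := by rw [one_div]; linarith
      rw [le_div_iff₀ h0] at hb
      nlinarith
    have h3 : Real.exp t ≤ Real.exp 3 := Real.exp_le_exp.mpr (by rw [abs_of_pos h] at ht; linarith)
    have : |1 - Real.exp t| = Real.exp t - 1 := by rw [abs_sub_comm]; exact abs_of_nonneg (by linarith)
    rw [this, abs_of_pos h]
    nlinarith [Real.exp_pos t]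

open scoped RealInnerProductSpace in
theorem stmt_6 (n : ℕ) :
    ∃ C > 0, ∀ (cB y : EuclideanSpace ℝ (Fin n)) (rB : ℝ),
      rB ≤ mrad ‖cB‖ → y ∈ Metric.closedBall cB rB →
      |1 - Real.exp ⟪cB - y, cB + y⟫| ≤ C * rB * (1 + ‖cB‖) := by
  refine ⟨2 * Real.exp 3, by positivity, fun cB y rB hr hy => ?_⟩
  have hrB0 : 0 ≤ rB := by
    have := Metric.nonempty_closedBall.mp ⟨y, hy⟩; exact this
  have hdist : ‖y - cB‖ ≤ rB := by
    rw [Metric.mem_closedBall, dist_eq_norm] at hy; exact hy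
  have hrB1 : rB ≤ 1 := by
    unfold mrad at hr
    split_ifs at hr with h
    · exact hr
    · have : ‖cB‖ > 1 := lt_of_not_ge h
      calc rB ≤ 1 / ‖cB‖ := hr
        _ ≤ 1 := by rw [div_le_one (by linarith)]; linarith
  have hrc : rB * ‖cB‖ ≤ 1 := by
    unfold mrad at hr
    split_ifs at hr with h
    · nlinarith [norm_nonneg cB]
    · have hc : (1:ℝ) < ‖cB‖ := lt_of_not_ge h
      calc rB * ‖cB‖ ≤ (1 / ‖cB‖) * ‖cB‖ := by nlinarith
        _ = 1 := by field_simp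
  set t := ⟪cB - y, cB + y⟫ with ht
  have hyn : ‖y‖ ≤ ‖cB‖ + rB := by
    calc ‖y‖ = ‖cB + (y - cB)‖ := by congr 1; abel
      _ ≤ ‖cB‖ + ‖y - cB‖ := norm_add_le _ _
      _ ≤ ‖cB‖ + rB := by linarith
  have htb : |t| ≤ rB * (2 * ‖cB‖ + 1) := by
    calc |t| ≤ ‖cB - y‖ * ‖cB + y‖ := abs_real_inner_le_norm _ _
      _ ≤ rB * (2 * ‖cB‖ + 1) := by
          have h1 : ‖cB - y‖ ≤ rB := by rwa [norm_sub_rev] at hdist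
          have h2 : ‖cB + y‖ ≤ 2 * ‖cB‖ + 1 := by
            calc ‖cB + y‖ ≤ ‖cB‖ + ‖y‖ := norm_add_le _ _
              _ ≤ 2 * ‖cB‖ + 1 := by linarith
          exact mul_le_mul h1 h2 (norm_nonneg _) hrB0
  have ht3 : |t| ≤ 3 := by nlinarith
  have := exp_sub_one_bound t ht3
  calc |1 - Real.exp t| ≤ Real.exp 3 * |t| := this
    _ ≤ Real.exp 3 * (rB * (2 * ‖cB‖ + 1)) := by
        exact mul_le_mul_of_nonneg_left htb (Real.exp_pos 3).le
    _ ≤ 2 * Real.exp 3 * rB * (1 + ‖cB‖) := by nlinarith [Real.exp_pos 3, norm_nonneg cB]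
end

section
/- Let g ∈ L¹(λ) on ℝⁿ be supported in a ball B with ∫ g dλ = 0. Then for every x ∉ 2B, every C¹ function φ supported in the unit ball with |φ| ≤ 1 and |∇φ| ≤ 1, and every t ≥ d(x, B), one has |φ_t * g(x)| ≤ C·r_B·d(x,B)^{-n-1}·‖g‖_{L¹(λ)}, where φ_t(z) = t^{-n}φ(z/t) and C depends only on n. In particular, sup over such φ and all t > 0 of |φ_t * g(x)| is at most C·‖g‖_{L¹(λ)}/λ(B) for x ∉ 2B. -/
open MeasureTheory

theorem stmt_10 (n : ℕ) :
    ∃ C > 0, ∀ (cB : EuclideanSpace ℝ (Fin n)) (rB : ℝ)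
      (g : EuclideanSpace ℝ (Fin n) → ℝ),
      0 < rB →
      Integrable g volume →
      Function.support g ⊆ Metric.closedBall cB rB →
      (∫ y, g y) = 0 →
      ∀ x ∉ Metric.closedBall cB (2 * rB),
      ∀ φ : EuclideanSpace ℝ (Fin n) → ℝ,
        ContDiff ℝ 1 φ →
        Function.support φ ⊆ Metric.closedBall 0 1 →
        (∀ z, |φ z| ≤ 1) →
        (∀ z, ‖fderiv ℝ φ z‖ ≤ 1) →
        (∀ t : ℝ, Metric.infDist x (Metric.closedBall cB rB) ≤ t →
          |∫ y, (t ^ n)⁻¹ * φ (t⁻¹ • (x - y)) * g y| ≤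
            C * rB * Metric.infDist x (Metric.closedBall cB rB) ^ (-(n : ℝ) - 1) *
              ∫ y, |g y|) ∧
        (∀ t : ℝ, 0 < t →
          |∫ y, (t ^ n)⁻¹ * φ (t⁻¹ • (x - y)) * g y| ≤
            C * (∫ y, |g y|) / (volume (Metric.closedBall cB rB)).toReal) := by
  classical
  set v : ℝ := (volume (Metric.ball (0 : EuclideanSpace ℝ (Fin n)) 1)).toReal with hv
  have hv0 : 0 < v := ENNReal.toReal_pos (Metric.measure_ball_pos _ _ one_pos).ne' measure_ball_lt_top.ne
  refine ⟨v + 1, by linarith, ?_⟩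
  intro cB rB g hrB hg hsupp hint x hx φ hφ hφsupp hφle hφd
  set d := Metric.infDist x (Metric.closedBall cB rB) with hd
  have hxc : 2 * rB < dist x cB := by
    simpa [Metric.mem_closedBall, not_le] using hx
  have hrd : rB < d := by
    by_contra hcon
    push_neg at hcon
    have h2 : Metric.infDist x (Metric.closedBall cB rB) < dist x cB - rB := by
      rw [← hd]; linarith
    obtain ⟨y, hy, hdy⟩ := (Metric.infDist_lt_iff ⟨cB, by simp [hrB.le]⟩).1 h2
    simp only [Metric.mem_closedBall] at hy
    have := dist_triangle x y cB
    linarith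
  have hd0 : 0 < d := hrB.trans hrd
  have hI0 : 0 ≤ ∫ y, |g y| := integral_nonneg fun y => abs_nonneg _
  have hφc : Continuous φ := hφ.continuous
  -- key estimate
  have key : ∀ t : ℝ, d ≤ t →
      |∫ y, (t ^ n)⁻¹ * φ (t⁻¹ • (x - y)) * g y| ≤ rB * (t ^ (n + 1))⁻¹ * ∫ y, |g y| := by
    intro t ht
    have ht0 : 0 < t := hd0.trans_le ht
    have htn : (0 : ℝ) < t ^ n := pow_pos ht0 n
    -- integrability
    have hcont : ∀ c : EuclideanSpace ℝ (Fin n) → EuclideanSpace ℝ (Fin n),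
        Continuous c → Continuous fun y => (t ^ n)⁻¹ * φ (t⁻¹ • (x - y)) := by
      intro c hc
      exact continuous_const.mul (hφc.comp (by fun_prop))
    have hcφ : Continuous fun y : EuclideanSpace ℝ (Fin n) =>
        (t ^ n)⁻¹ * φ (t⁻¹ • (x - y)) :=
      continuous_const.mul (hφc.comp (by fun_prop))
    have hF : Integrable (fun y => (t ^ n)⁻¹ * φ (t⁻¹ • (x - y)) * g y) volume := by
      exact hg.bdd_mul hcφ.aestronglyMeasurable
        (c := (t ^ n)⁻¹) (Filter.Eventually.of_forall fun y => by
          rw [norm_mul]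
          calc ‖(t ^ n)⁻¹‖ * ‖φ (t⁻¹ • (x - y))‖ ≤ ‖(t ^ n)⁻¹‖ * 1 := by
                exact mul_le_mul_of_nonneg_left (hφle _) (norm_nonneg _)
            _ = (t ^ n)⁻¹ := by rw [mul_one, Real.norm_eq_abs, abs_of_pos (inv_pos.2 htn)])
    set b : ℝ := φ (t⁻¹ • (x - cB)) with hb
    have hG : Integrable
        (fun y => (t ^ n)⁻¹ * (φ (t⁻¹ • (x - y)) - b) * g y) volume := by
      have : (fun y => (t ^ n)⁻¹ * (φ (t⁻¹ • (x - y)) - b) * g y)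
          = fun y => (t ^ n)⁻¹ * φ (t⁻¹ • (x - y)) * g y - ((t ^ n)⁻¹ * b) * g y := by
        funext y; ring
      rw [this]
      exact hF.sub (hg.const_mul _)
    have heq : ∫ y, (t ^ n)⁻¹ * φ (t⁻¹ • (x - y)) * g y
        = ∫ y, (t ^ n)⁻¹ * (φ (t⁻¹ • (x - y)) - b) * g y := by
      have : (fun y => (t ^ n)⁻¹ * (φ (t⁻¹ • (x - y)) - b) * g y)
          = fun y => (t ^ n)⁻¹ * φ (t⁻¹ • (x - y)) * g y - ((t ^ n)⁻¹ * b) * g y := by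
        funext y; ring
      rw [this, integral_sub hF (hg.const_mul _), integral_const_mul, hint, mul_zero, sub_zero]
    rw [heq]
    -- pointwise bound
    have hpt : ∀ y, |( t ^ n)⁻¹ * (φ (t⁻¹ • (x - y)) - b) * g y|
        ≤ rB * (t ^ (n + 1))⁻¹ * |g y| := by
      intro y
      by_cases hgy : g y = 0
      · simp [hgy]
      · have hy : dist y cB ≤ rB := by
          have := hsupp (Function.mem_support.2 hgy)
          simpa [Metric.mem_closedBall] using this
        have hdiff : |φ (t⁻¹ • (x - y)) - b| ≤ t⁻¹ * rB := by
          have hmvt : ‖φ (t⁻¹ • (x - y)) - φ (t⁻¹ • (x - cB))‖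
              ≤ 1 * ‖(t⁻¹ • (x - y)) - (t⁻¹ • (x - cB))‖ := by
            apply Convex.norm_image_sub_le_of_norm_fderiv_le
              (fun z _ => hφ.differentiable one_ne_zero z) (fun z _ => hφd z)
              convex_univ (Set.mem_univ _) (Set.mem_univ _)
          rw [hb]
          calc |φ (t⁻¹ • (x - y)) - φ (t⁻¹ • (x - cB))|
              ≤ 1 * ‖(t⁻¹ • (x - y)) - (t⁻¹ • (x - cB))‖ := hmvt
            _ = ‖t⁻¹ • (cB - y)‖ := by rw [one_mul, ← smul_sub]; congr 1; abel
            _ = t⁻¹ * ‖cB - y‖ := by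
                rw [norm_smul, Real.norm_eq_abs, abs_of_pos (inv_pos.2 ht0)]
            _ ≤ t⁻¹ * rB := by
                apply mul_le_mul_of_nonneg_left _ (inv_pos.2 ht0).le
                rw [← dist_eq_norm, dist_comm]
                exact hy
        calc |(t ^ n)⁻¹ * (φ (t⁻¹ • (x - y)) - b) * g y|
            = (t ^ n)⁻¹ * |φ (t⁻¹ • (x - y)) - b| * |g y| := by
              rw [abs_mul, abs_mul, abs_of_pos (inv_pos.2 htn)]
          _ ≤ (t ^ n)⁻¹ * (t⁻¹ * rB) * |g y| := by
              apply mul_le_mul_of_nonneg_right _ (abs_nonneg _)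
              exact mul_le_mul_of_nonneg_left hdiff (inv_pos.2 htn).le
          _ = rB * (t ^ (n + 1))⁻¹ * |g y| := by
              rw [pow_succ, mul_inv]; ring
    calc |∫ y, (t ^ n)⁻¹ * (φ (t⁻¹ • (x - y)) - b) * g y|
        ≤ ∫ y, |(t ^ n)⁻¹ * (φ (t⁻¹ • (x - y)) - b) * g y| := by
          simpa only [Real.norm_eq_abs] using norm_integral_le_integral_norm
            (μ := volume) (fun y => (t ^ n)⁻¹ * (φ (t⁻¹ • (x - y)) - b) * g y)
      _ ≤ ∫ y, rB * (t ^ (n + 1))⁻¹ * |g y| :=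
          integral_mono hG.abs ((hg.abs).const_mul _) hpt
      _ = rB * (t ^ (n + 1))⁻¹ * ∫ y, |g y| := integral_const_mul _ _
  constructor
  · intro t ht
    have ht0 : 0 < t := hd0.trans_le ht
    have hrp : d ^ (-(n : ℝ) - 1) = (d ^ (n + 1))⁻¹ := by
      rw [show (-(n : ℝ) - 1) = -((n + 1 : ℕ) : ℝ) by push_cast; ring,
        Real.rpow_neg hd0.le, Real.rpow_natCast]
    have h1 : (t ^ (n + 1))⁻¹ ≤ (d ^ (n + 1))⁻¹ := by
      apply inv_anti₀ (pow_pos hd0 _)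
      exact pow_le_pow_left₀ hd0.le ht _
    calc |∫ y, (t ^ n)⁻¹ * φ (t⁻¹ • (x - y)) * g y|
        ≤ rB * (t ^ (n + 1))⁻¹ * ∫ y, |g y| := key t ht
      _ ≤ rB * (d ^ (n + 1))⁻¹ * ∫ y, |g y| := by
          apply mul_le_mul_of_nonneg_right _ hI0
          exact mul_le_mul_of_nonneg_left h1 hrB.le
      _ ≤ (v + 1) * rB * d ^ (-(n : ℝ) - 1) * ∫ y, |g y| := by
          rw [hrp]
          apply mul_le_mul_of_nonneg_right _ hI0
          nlinarith [inv_pos.2 (pow_pos hd0 (n + 1)), hrB.le,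
            mul_nonneg hrB.le (inv_pos.2 (pow_pos hd0 (n + 1))).le]
  · intro t ht0
    have hvol : (volume (Metric.closedBall cB rB)).toReal = rB ^ n * v := by
      rw [Measure.addHaar_closedBall _ _ hrB.le, finrank_euclideanSpace_fin,
        ENNReal.toReal_mul, ENNReal.toReal_ofReal (by positivity)]
    rcases le_or_gt d t with hdt | htd
    · -- use key
      have h1 : (t ^ (n + 1))⁻¹ ≤ (rB ^ (n + 1))⁻¹ := by
        apply inv_anti₀ (pow_pos hrB _)
        exact pow_le_pow_left₀ hrB.le (le_of_lt (hrd.trans_le hdt)) _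
      have h2 : rB * (t ^ (n + 1))⁻¹ ≤ (v + 1) / (rB ^ n * v) := by
        have e1 : rB * (rB ^ (n + 1))⁻¹ = (rB ^ n)⁻¹ := by
          rw [pow_succ, mul_inv]
          field_simp
        calc rB * (t ^ (n + 1))⁻¹ ≤ rB * (rB ^ (n + 1))⁻¹ :=
              mul_le_mul_of_nonneg_left h1 hrB.le
          _ = (rB ^ n)⁻¹ := e1
          _ ≤ (v + 1) / (rB ^ n * v) := by
              rw [le_div_iff₀ (by positivity : (0:ℝ) < rB ^ n * v)]
              have e2 : (rB ^ n)⁻¹ * (rB ^ n * v) = v := by field_simp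
              rw [e2]; linarith
      calc |∫ y, (t ^ n)⁻¹ * φ (t⁻¹ • (x - y)) * g y|
          ≤ rB * (t ^ (n + 1))⁻¹ * ∫ y, |g y| := key t hdt
        _ ≤ ((v + 1) / (rB ^ n * v)) * ∫ y, |g y| :=
            mul_le_mul_of_nonneg_right h2 hI0
        _ = (v + 1) * (∫ y, |g y|) / (volume (Metric.closedBall cB rB)).toReal := by
            rw [hvol]; ring
    · -- integral vanishes
      have hzero : ∀ y, (t ^ n)⁻¹ * φ (t⁻¹ • (x - y)) * g y = 0 := by
        intro y
        by_cases hgy : g y = 0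
        · simp [hgy]
        · have hy : y ∈ Metric.closedBall cB rB := hsupp (Function.mem_support.2 hgy)
          have hdxy : d ≤ dist x y := Metric.infDist_le_dist_of_mem hy
          have hφ0 : φ (t⁻¹ • (x - y)) = 0 := by
            by_contra hne
            have := hφsupp (Function.mem_support.2 hne)
            simp only [Metric.mem_closedBall, dist_zero_right] at this
            have hnorm : ‖t⁻¹ • (x - y)‖ = t⁻¹ * ‖x - y‖ := by
              rw [norm_smul, Real.norm_eq_abs, abs_of_pos (inv_pos.2 ht0)]
            rw [hnorm, ← dist_eq_norm] at this
            have h1 : t < dist x y := htd.trans_le hdxy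
            have : t⁻¹ * dist x y ≤ 1 := this
            nlinarith [inv_pos.2 ht0, inv_mul_cancel₀ ht0.ne']
          simp [hφ0]
      have : (∫ y, (t ^ n)⁻¹ * φ (t⁻¹ • (x - y)) * g y) = 0 := by
        simp only [hzero, integral_zero]
      rw [this, abs_zero]
      positivity
end

section
/- Let a be a Gaussian (1,r)-atom on ℝⁿ (1 < r < ∞) associated to an admissible ball B: supp a ⊆ B, ∫ a dγ = 0, ‖a‖_{L^r(γ)} ≤ γ(B)^{1/r−1}. Then a·γ₀ is C times a Lebesgue (1,r)-atom associated to B: ∫ a γ₀ dλ = 0 and ‖a γ₀‖_{L^r(λ)} ≤ C·λ(B)^{1/r−1}, where C depends only on n and r. -/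
open MeasureTheory
open scoped ENNReal

lemma gaussDensity_measurable (n : ℕ) : Measurable (gaussDensity n) := by
  unfold gaussDensity
  fun_prop

/-- integral against Gauss measure equals weighted Lebesgue integral -/
lemma integral_gaussMeasure (n : ℕ) (f : EuclideanSpace ℝ (Fin n) → ℝ) :
    (∫ x, f x ∂gaussMeasure n) = ∫ x, f x * gaussDensity n x := by
  have h : gaussMeasure n =
      volume.withDensity fun x => ((fun x => (gaussDensity n x).toNNReal) x : ℝ≥0∞) := by
    simp [gaussMeasure, ENNReal.ofReal]
  rw [h, integral_withDensity_eq_integral_smul ((gaussDensity_measurable n).real_toNNReal) f]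
  congr 1
  ext x
  rw [NNReal.smul_def, Real.coe_toNNReal _ (gaussDensity_pos n x).le, smul_eq_mul, mul_comm]

theorem stmt_16 (n : ℕ) (r : ℝ) (hr1 : 1 < r) :
    ∃ C > 0, ∀ (cB : EuclideanSpace ℝ (Fin n)) (rad : ℝ)
      (a : EuclideanSpace ℝ (Fin n) → ℝ),
      0 < rad → rad ≤ mrad ‖cB‖ →
      Measurable a →
      Function.support a ⊆ Metric.closedBall cB rad →
      Integrable a (gaussMeasure n) →
      (∫ x, a x ∂gaussMeasure n) = 0 →
      (∫ x, |a x| ^ r ∂gaussMeasure n) ^ (1 / r) ≤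
        (gaussMeasure n (Metric.closedBall cB rad)).toReal ^ (1 / r - 1) →
      (∫ x, a x * gaussDensity n x) = 0 ∧
        (∫ x, |a x * gaussDensity n x| ^ r) ^ (1 / r) ≤
          C * (volume (Metric.closedBall cB rad)).toReal ^ (1 / r - 1) := by
  have hr0 : (0 : ℝ) < r := lt_trans one_pos hr1
  have hrne : r ≠ 0 := ne_of_gt hr0
  have hinv : 1 / r < 1 := by rw [div_lt_one hr0]; exact hr1
  have hinvpos : 0 < 1 / r := by positivity
  refine ⟨Real.exp 3 ^ (1 - 1 / r) * Real.exp (-3) ^ (1 / r - 1), by positivity, ?_⟩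
  intro cB rad a hrad hradm ha hsupp hint hzero hnorm
  set B := Metric.closedBall cB rad with hB
  set g := gaussDensity n with hg
  have hgpos : ∀ x, 0 < g x := gaussDensity_pos n
  set m := g cB with hm
  have hmpos : 0 < m := hgpos cB
  -- radius constraints
  have hrad1 : rad ≤ 1 := by
    rcases le_or_gt ‖cB‖ 1 with h | h
    · simpa [mrad, h] using hradm
    · have : rad ≤ 1 / ‖cB‖ := by simpa [mrad, not_le.mpr h] using hradm
      calc rad ≤ 1 / ‖cB‖ := this
        _ ≤ 1 := by rw [div_le_one (lt_trans one_pos h)]; exact h.le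
  have hradc : rad * ‖cB‖ ≤ 1 := by
    rcases le_or_gt ‖cB‖ 1 with h | h
    · nlinarith [norm_nonneg cB]
    · have h2 : rad ≤ 1 / ‖cB‖ := by simpa [mrad, not_le.mpr h] using hradm
      have := mul_le_mul_of_nonneg_right h2 (norm_nonneg cB)
      rwa [one_div, inv_mul_cancel₀ (by positivity : ‖cB‖ ≠ 0)] at this
  -- density comparison on the ball
  have hcomp : ∀ x ∈ B, Real.exp (-3) * m ≤ g x ∧ g x ≤ Real.exp 3 * m := by
    intro x hx
    have hd : ‖x - cB‖ ≤ rad := by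
      rw [Metric.mem_closedBall, dist_eq_norm] at hx; exact hx
    have ht : |‖x‖ - ‖cB‖| ≤ ‖x - cB‖ := abs_norm_sub_norm_le x cB
    have h1 : ‖x‖ ^ 2 ≤ ‖cB‖ ^ 2 + 3 := by
      rcases abs_le.mp ht with ⟨hl, hu⟩
      nlinarith [norm_nonneg x, norm_nonneg cB, norm_nonneg (x - cB), hrad.le]
    have h2 : ‖cB‖ ^ 2 ≤ ‖x‖ ^ 2 + 3 := by
      rcases abs_le.mp ht with ⟨hl, hu⟩
      nlinarith [norm_nonneg x, norm_nonneg cB, norm_nonneg (x - cB), hrad.le]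
    constructor
    · have : Real.exp (-3) * Real.exp (-‖cB‖ ^ 2) ≤ Real.exp (-‖x‖ ^ 2) := by
        rw [← Real.exp_add]
        exact Real.exp_le_exp.mpr (by linarith)
      have hpi : (0:ℝ) < Real.pi ^ (-(n : ℝ) / 2) := by positivity
      simp only [hg, hm, gaussDensity]
      calc Real.exp (-3) * (Real.pi ^ (-(n : ℝ) / 2) * Real.exp (-‖cB‖ ^ 2))
          = Real.pi ^ (-(n : ℝ) / 2) * (Real.exp (-3) * Real.exp (-‖cB‖ ^ 2)) := by ring
        _ ≤ Real.pi ^ (-(n : ℝ) / 2) * Real.exp (-‖x‖ ^ 2) :=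
            mul_le_mul_of_nonneg_left this hpi.le
    · have : Real.exp (-‖x‖ ^ 2) ≤ Real.exp 3 * Real.exp (-‖cB‖ ^ 2) := by
        rw [← Real.exp_add]
        exact Real.exp_le_exp.mpr (by linarith)
      have hpi : (0:ℝ) < Real.pi ^ (-(n : ℝ) / 2) := by positivity
      simp only [hg, hm, gaussDensity]
      calc Real.pi ^ (-(n : ℝ) / 2) * Real.exp (-‖x‖ ^ 2)
          ≤ Real.pi ^ (-(n : ℝ) / 2) * (Real.exp 3 * Real.exp (-‖cB‖ ^ 2)) :=
            mul_le_mul_of_nonneg_left this hpi.le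
        _ = Real.exp 3 * (Real.pi ^ (-(n : ℝ) / 2) * Real.exp (-‖cB‖ ^ 2)) := by ring
  constructor
  · rw [← integral_gaussMeasure]; exact hzero
  -- main estimate
  have hBmeas : MeasurableSet B := measurableSet_closedBall
  have hvolpos : 0 < (volume B).toReal :=
    ENNReal.toReal_pos (ne_of_gt (Metric.measure_closedBall_pos volume cB hrad))
      (measure_closedBall_lt_top).ne
  -- lower bound for gauss measure of B
  have hgB : Real.exp (-3) * m * (volume B).toReal ≤ (gaussMeasure n B).toReal := by
    have happ : gaussMeasure n B = ∫⁻ x in B, ENNReal.ofReal (g x) ∂volume := by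
      rw [gaussMeasure, withDensity_apply _ hBmeas]
    have hlow : ENNReal.ofReal (Real.exp (-3) * m) * volume B ≤ gaussMeasure n B := by
      rw [happ, ← setLIntegral_const B (ENNReal.ofReal (Real.exp (-3) * m))]
      refine setLIntegral_mono ((gaussDensity_measurable n).ennreal_ofReal) ?_
      intro x hx
      exact ENNReal.ofReal_le_ofReal (hcomp x hx).1
    have hup : gaussMeasure n B ≤ ENNReal.ofReal (Real.exp 3 * m) * volume B := by
      rw [happ, ← setLIntegral_const B (ENNReal.ofReal (Real.exp 3 * m))]
      exact setLIntegral_mono measurable_const fun x hx =>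
        ENNReal.ofReal_le_ofReal (hcomp x hx).2
    have hfin : gaussMeasure n B ≠ ⊤ :=
      ne_top_of_le_ne_top (ENNReal.mul_ne_top ENNReal.ofReal_ne_top
        measure_closedBall_lt_top.ne) hup
    calc Real.exp (-3) * m * (volume B).toReal
        = (ENNReal.ofReal (Real.exp (-3) * m) * volume B).toReal := by
          rw [ENNReal.toReal_mul,
            ENNReal.toReal_ofReal (mul_nonneg (Real.exp_pos _).le hmpos.le)]
      _ ≤ (gaussMeasure n B).toReal := ENNReal.toReal_mono hfin hlow
  have hXpos : 0 < Real.exp (-3) * m * (volume B).toReal :=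
    mul_pos (mul_pos (Real.exp_pos _) hmpos) hvolpos
  -- case split on integrability of |a·g|^r
  by_cases hI : Integrable (fun x => |a x * g x| ^ r) volume
  · -- pointwise bounds
    have hbd : ∀ x, |a x * g x| ^ r ≤ (Real.exp 3 * m) ^ (r - 1) * (|a x| ^ r * g x) := by
      intro x
      by_cases hax : a x = 0
      · simp [hax, Real.zero_rpow hrne]
      · have hxB : x ∈ B := hsupp (Function.mem_support.mpr hax)
        have hgub := (hcomp x hxB).2
        have hgx := hgpos x
        have : |a x * g x| ^ r = |a x| ^ r * g x ^ r := by
          rw [abs_mul, abs_of_pos hgx, Real.mul_rpow (abs_nonneg _) hgx.le]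
        rw [this]
        have hsplit : g x ^ r = g x ^ (r - 1) * g x := by
          have h' : g x ^ (r - 1) * g x ^ (1:ℝ) = g x ^ r := by
            rw [← Real.rpow_add hgx]; norm_num
          rw [← h', Real.rpow_one]
        rw [hsplit]
        have h1 : g x ^ (r - 1) ≤ (Real.exp 3 * m) ^ (r - 1) :=
          Real.rpow_le_rpow hgx.le hgub (by linarith)
        calc |a x| ^ r * (g x ^ (r - 1) * g x)
            ≤ |a x| ^ r * ((Real.exp 3 * m) ^ (r - 1) * g x) := by
              apply mul_le_mul_of_nonneg_left _ (Real.rpow_nonneg (abs_nonneg _) r)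
              exact mul_le_mul_of_nonneg_right h1 hgx.le
          _ = (Real.exp 3 * m) ^ (r - 1) * (|a x| ^ r * g x) := by ring
    -- integrability of |a|^r * g
    have hI2 : Integrable (fun x => |a x| ^ r * g x) volume := by
      apply Integrable.mono' (hI.const_mul ((Real.exp (-3) * m) ^ (1 - r)))
        ((((Real.continuous_rpow_const hr0.le).measurable.comp ha.abs).mul (gaussDensity_measurable n)).aestronglyMeasurable)
      filter_upwards with x
      show ‖|a x| ^ r * g x‖ ≤ (Real.exp (-3) * m) ^ (1 - r) * |a x * g x| ^ r
      rw [Real.norm_eq_abs, abs_of_nonneg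
        (mul_nonneg (Real.rpow_nonneg (abs_nonneg _) r) (hgpos x).le)]
      by_cases hax : a x = 0
      · simp [hax, Real.zero_rpow hrne]
      · have hxB : x ∈ B := hsupp (Function.mem_support.mpr hax)
        have hglb := (hcomp x hxB).1
        have hgx := hgpos x
        have habs : |a x * g x| ^ r = |a x| ^ r * g x ^ r := by
          rw [abs_mul, abs_of_pos hgx, Real.mul_rpow (abs_nonneg _) hgx.le]
        have h1 : g x ^ (1 - r) ≤ (Real.exp (-3) * m) ^ (1 - r) :=
          Real.rpow_le_rpow_of_nonpos (by positivity) hglb (by linarith)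
        have hsplit : g x = g x ^ r * g x ^ (1 - r) := by
          rw [← Real.rpow_add hgx]
          norm_num
        calc |a x| ^ r * g x = |a x| ^ r * g x ^ r * g x ^ (1 - r) := by
              rw [mul_assoc, ← hsplit]
          _ ≤ |a x| ^ r * g x ^ r * (Real.exp (-3) * m) ^ (1 - r) := by
              apply mul_le_mul_of_nonneg_left h1
                (mul_nonneg (Real.rpow_nonneg (abs_nonneg _) _) (Real.rpow_nonneg (hgpos x).le _))
          _ = (Real.exp (-3) * m) ^ (1 - r) * |a x * g x| ^ r := by
              rw [habs]; ring
    -- the key integral inequality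
    have hle : (∫ x, |a x * g x| ^ r) ≤
        (Real.exp 3 * m) ^ (r - 1) * ∫ x, |a x| ^ r * g x := by
      calc (∫ x, |a x * g x| ^ r)
          ≤ ∫ x, (Real.exp 3 * m) ^ (r - 1) * (|a x| ^ r * g x) :=
            integral_mono hI (hI2.const_mul _) hbd
        _ = (Real.exp 3 * m) ^ (r - 1) * ∫ x, |a x| ^ r * g x := integral_const_mul _ _
    have hIr : (∫ x, |a x| ^ r ∂gaussMeasure n) = ∫ x, |a x| ^ r * g x :=
      integral_gaussMeasure n _
    have hInn : 0 ≤ ∫ x, |a x| ^ r * g x :=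
      integral_nonneg fun x => mul_nonneg (Real.rpow_nonneg (abs_nonneg _) r) (hgpos x).le
    have hstep : (∫ x, |a x * g x| ^ r) ^ (1 / r) ≤
        (Real.exp 3 * m) ^ (1 - 1 / r) * (∫ x, |a x| ^ r * g x) ^ (1 / r) := by
      calc (∫ x, |a x * g x| ^ r) ^ (1 / r)
          ≤ ((Real.exp 3 * m) ^ (r - 1) * ∫ x, |a x| ^ r * g x) ^ (1 / r) :=
            Real.rpow_le_rpow (integral_nonneg fun x => Real.rpow_nonneg (abs_nonneg _) r)
              hle hinvpos.le
        _ = (Real.exp 3 * m) ^ (1 - 1 / r) * (∫ x, |a x| ^ r * g x) ^ (1 / r) := by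
            have he3m : (0:ℝ) ≤ Real.exp 3 * m := mul_nonneg (Real.exp_pos 3).le hmpos.le
            rw [Real.mul_rpow (Real.rpow_nonneg he3m _) hInn, ← Real.rpow_mul he3m]
            congr 2
            field_simp
    have hmono : (gaussMeasure n B).toReal ^ (1 / r - 1) ≤
        (Real.exp (-3) * m * (volume B).toReal) ^ (1 / r - 1) :=
      Real.rpow_le_rpow_of_nonpos hXpos hgB (by linarith)
    have hnorm' : (∫ x, |a x| ^ r * g x) ^ (1 / r) ≤
        (Real.exp (-3) * m * (volume B).toReal) ^ (1 / r - 1) := by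
      rw [← hIr]; exact le_trans hnorm hmono
    calc (∫ x, |a x * g x| ^ r) ^ (1 / r)
        ≤ (Real.exp 3 * m) ^ (1 - 1 / r) *
          (Real.exp (-3) * m * (volume B).toReal) ^ (1 / r - 1) := by
          refine le_trans hstep ?_
          exact mul_le_mul_of_nonneg_left hnorm' (Real.rpow_nonneg (by positivity) _)
      _ = Real.exp 3 ^ (1 - 1 / r) * Real.exp (-3) ^ (1 / r - 1) *
          (volume B).toReal ^ (1 / r - 1) := by
          rw [Real.mul_rpow (Real.exp_pos 3).le hmpos.le,
            Real.mul_rpow (mul_nonneg (Real.exp_pos _).le hmpos.le) hvolpos.le,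
            Real.mul_rpow (Real.exp_pos _).le hmpos.le]
          have hcancel : m ^ (1 - 1 / r) * m ^ (1 / r - 1) = 1 := by
            rw [← Real.rpow_add hmpos]
            norm_num
          calc Real.exp 3 ^ (1 - 1 / r) * m ^ (1 - 1 / r) *
              (Real.exp (-3) ^ (1 / r - 1) * m ^ (1 / r - 1) *
                (volume B).toReal ^ (1 / r - 1))
              = Real.exp 3 ^ (1 - 1 / r) * Real.exp (-3) ^ (1 / r - 1) *
                (volume B).toReal ^ (1 / r - 1) *
                (m ^ (1 - 1 / r) * m ^ (1 / r - 1)) := by ring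
            _ = _ := by rw [hcancel, mul_one]
  · rw [integral_undef hI, Real.zero_rpow (by positivity : 1 / r ≠ 0)]
    positivity
end

section
/- Let B₀ = B(0,1) ⊂ ℝⁿ and let B be a maximal admissible ball (radius exactly min(1, 1/|c_B|)). Define the chain of maximal admissible balls B̃_0 = B(0,1), B̃_1, ..., with centers on the segment [0, c_B], where ρ_j = |c_{B̃_j}| satisfies ρ_0 = 0, ρ_1 = 1, ρ_j − 1/ρ_j = ρ_{j−1}. Let N be minimal such that c_B ∈ B̃_{N−1}. Then N ≤ |c_B|² + 1. -/
theorem stmt_18 (ρ : ℕ → ℝ) (h0 : ρ 0 = 0) (h1 : ρ 1 = 1)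
    (hpos : ∀ j, 1 ≤ j → 0 < ρ j)
    (hrec : ∀ j, 1 ≤ j → ρ j - 1 / ρ j = ρ (j - 1))
    (b : ℝ) (hb : 0 ≤ b) (N : ℕ) (hN : 1 ≤ N)
    (hmem : b - ρ (N - 1) ≤ (if N - 1 = 0 then 1 else min 1 (1 / ρ (N - 1))))
    (hmin : ∀ k < N - 1, ¬(b - ρ k ≤ (if k = 0 then 1 else min 1 (1 / ρ k)))) :
    (N : ℝ) ≤ b ^ 2 + 1 := by
  -- ρ j ≥ 1 for j ≥ 1
  have hge1 : ∀ j, 1 ≤ j → 1 ≤ ρ j := by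
    intro j hj
    induction j with
    | zero => omega
    | succ n ih =>
      rcases Nat.eq_or_lt_of_le hj with h | h
      · rw [← h]; exact le_of_eq h1.symm
      · have hn : 1 ≤ n := by omega
        have hrn := hrec (n + 1) (by omega)
        simp only [Nat.add_sub_cancel] at hrn
        have hρn := ih hn
        have hp := hpos (n + 1) (by omega)
        have hinv : 0 < 1 / ρ (n + 1) := by positivity
        nlinarith
  -- j ≤ ρ j ^ 2
  have hsq : ∀ j : ℕ, (j : ℝ) ≤ ρ j ^ 2 := by
    intro j
    induction j with
    | zero => simp [h0]
    | succ n ih =>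
      have hg := hge1 (n + 1) (by omega)
      have hp := hpos (n + 1) (by omega)
      have hrn := hrec (n + 1) (by omega)
      simp only [Nat.add_sub_cancel] at hrn
      have hinv : 1 / ρ (n + 1) ≤ 1 := by
        rw [div_le_one hp]; exact hg
      have hinvpos : 0 < 1 / ρ (n + 1) := by positivity
      have key : ρ n ^ 2 = ρ (n + 1) ^ 2 - 2 + (1 / ρ (n + 1)) ^ 2 := by
        have : ρ n = ρ (n + 1) - 1 / ρ (n + 1) := hrn.symm
        rw [this]
        field_simp
        ring
      push_cast
      nlinarith [sq_nonneg (1 / ρ (n + 1))]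
  rcases Nat.lt_or_ge N 2 with hN2 | hN2
  · interval_cases N
    push_cast
    nlinarith
  · -- N ≥ 2, use minimality at k = N - 2
    have hk := hmin (N - 2) (by omega)
    push_neg at hk
    rcases Nat.lt_or_ge (N - 2) 1 with hk0 | hk1
    · have hNe : N = 2 := by omega
      subst hNe
      simp [h0] at hk
      push_cast
      nlinarith
    · have hg := hge1 (N - 2) hk1
      have hp := hpos (N - 2) hk1
      have hinv : 1 / ρ (N - 2) ≤ 1 := by rw [div_le_one hp]; exact hg
      rw [if_neg (by omega), min_eq_right hinv] at hk
      -- b > ρ (N-2) + 1/ρ (N-2)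
      have hsqk := hsq (N - 2)
      have hb2 : (N : ℝ) - 2 + 2 ≤ b ^ 2 := by
        have hcast : ((N - 2 : ℕ) : ℝ) = (N : ℝ) - 2 := by
          push_cast [Nat.cast_sub (by omega : 2 ≤ N)]; ring
        rw [hcast] at hsqk
        have hbig : ρ (N - 2) + 1 / ρ (N - 2) < b := by linarith
        have hpos2 : (0:ℝ) < ρ (N - 2) + 1 / ρ (N - 2) := by positivity
        have hsqb : (ρ (N - 2) + 1 / ρ (N - 2)) ^ 2 < b ^ 2 := by nlinarith
        have hexp : (ρ (N - 2) + 1 / ρ (N - 2)) ^ 2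
            = ρ (N - 2) ^ 2 + 2 + (1 / ρ (N - 2)) ^ 2 := by
          field_simp; ring
        nlinarith [sq_nonneg (1 / ρ (N - 2))]
      linarith
end

section
/- Let B and B' be two maximal admissible balls in ℝⁿ with centers on a common ray from the origin, with |c_{B'}| − 1/|c_{B'}| = |c_B| (so ∂B' contains c_B), and |c_B| ≥ 1. Then the largest ball contained in B ∩ B' has radius comparable to r_B: there exist dimensional constants 0 < c ≤ 1 such that B ∩ B' contains a ball of radius c·r_B, and consequently its Gaussian measure is comparable to γ(B). -/
open MeasureTheory
open scoped ENNReal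

set_option maxHeartbeats 1000000 in
theorem stmt_19 (n : ℕ) (hn : 1 ≤ n) :
    ∃ c : ℝ, 0 < c ∧ c ≤ 1 ∧ ∃ κ : ℝ, 0 < κ ∧
      ∀ (u : EuclideanSpace ℝ (Fin n)) (b b' : ℝ),
        ‖u‖ = 1 → 1 ≤ b → b < b' → b' - 1 / b' = b →
        (∃ z, Metric.closedBall z (c * (1 / b)) ⊆
            Metric.closedBall (b • u) (1 / b) ∩ Metric.closedBall (b' • u) (1 / b')) ∧
          ENNReal.ofReal κ * gaussMeasure n (Metric.closedBall (b • u) (1 / b)) ≤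
            gaussMeasure n
              (Metric.closedBall (b • u) (1 / b) ∩ Metric.closedBall (b' • u) (1 / b')) ∧
          gaussMeasure n
              (Metric.closedBall (b • u) (1 / b) ∩ Metric.closedBall (b' • u) (1 / b')) ≤
            gaussMeasure n (Metric.closedBall (b • u) (1 / b)) := by
  refine ⟨1/4, by norm_num, by norm_num,
    Real.exp (-(13/4)) * (1/4) ^ n, by positivity, ?_⟩
  intro u b b' hu hb hbb' heq
  have hb0 : (0:ℝ) < b := by linarith
  have hb'0 : (0:ℝ) < b' := by linarith
  have hinv1 : 1 / b' ≤ 1 := by rw [div_le_one hb'0]; linarith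
  have hb'2b : b' ≤ 2 * b := by nlinarith
  have h2b' : 1 / (2*b) ≤ 1 / b' := one_div_le_one_div_of_le hb'0 hb'2b
  have h4b2b : 1 / (4*b) ≤ 1 / (2*b) := by
    apply one_div_le_one_div_of_le (by positivity); linarith
  have h44 : 1/(4*b) + 1/(4*b) = 1/(2*b) := by
    field_simp; ring
  have h2bb : 1/(2*b) ≤ 1/b := one_div_le_one_div_of_le hb0 (by linarith)
  set z : EuclideanSpace ℝ (Fin n) := (b + 1/(4*b)) • u with hzdef
  have hzb : ‖z - b • u‖ = 1/(4*b) := by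
    rw [hzdef, ← sub_smul, norm_smul, Real.norm_eq_abs, hu, mul_one,
      show b + 1/(4*b) - b = 1/(4*b) by ring, abs_of_pos (by positivity)]
  have hzb' : ‖z - b' • u‖ = 1/b' - 1/(4*b) := by
    rw [hzdef, ← sub_smul, norm_smul, Real.norm_eq_abs, hu, mul_one,
      show b + 1/(4*b) - b' = -(1/b' - 1/(4*b)) by rw [← heq]; ring, abs_neg,
      abs_of_nonneg (by linarith)]
  have hsub : Metric.closedBall z ((1/4) * (1/b)) ⊆
      Metric.closedBall (b • u) (1 / b) ∩ Metric.closedBall (b' • u) (1 / b') := by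
    intro x hx
    rw [Metric.mem_closedBall, dist_eq_norm] at hx
    have h14 : (1/4 : ℝ) * (1/b) = 1/(4*b) := by ring
    rw [h14] at hx
    constructor
    · rw [Metric.mem_closedBall, dist_eq_norm]
      calc ‖x - b • u‖ ≤ ‖x - z‖ + ‖z - b • u‖ := by
            simpa using norm_sub_le_norm_sub_add_norm_sub x z (b • u)
        _ ≤ 1/(4*b) + 1/(4*b) := by rw [hzb]; linarith
        _ ≤ 1/b := by rw [h44]; exact h2bb
    · rw [Metric.mem_closedBall, dist_eq_norm]
      calc ‖x - b' • u‖ ≤ ‖x - z‖ + ‖z - b' • u‖ := by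
            simpa using norm_sub_le_norm_sub_add_norm_sub x z (b' • u)
        _ ≤ 1/(4*b) + (1/b' - 1/(4*b)) := by rw [hzb']; linarith
        _ = 1/b' := by ring
  refine ⟨⟨z, hsub⟩, ?_, measure_mono Set.inter_subset_left⟩
  -- measure comparison
  set M : ℝ := Real.pi ^ (-(n : ℝ) / 2) * Real.exp (-(b - 1/b)^2) with hMdef
  set m : ℝ := Real.pi ^ (-(n : ℝ) / 2) * Real.exp (-(b + 1/(2*b))^2) with hmdef
  have hM0 : 0 < M := by positivity
  have hm0 : 0 < m := by positivity
  have hmeas : Measurable fun x : EuclideanSpace ℝ (Fin n) =>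
      ENNReal.ofReal (gaussDensity n x) := by
    unfold gaussDensity; fun_prop
  have happ : ∀ s : Set (EuclideanSpace ℝ (Fin n)), MeasurableSet s →
      gaussMeasure n s = ∫⁻ x in s, ENNReal.ofReal (gaussDensity n x) := by
    intro s hs; rw [gaussMeasure, withDensity_apply _ hs]
  set V := volume (Metric.ball (0 : EuclideanSpace ℝ (Fin n)) 1) with hVdef
  have hfr : Module.finrank ℝ (EuclideanSpace ℝ (Fin n)) = n := finrank_euclideanSpace_fin
  have hvolB : volume (Metric.closedBall (b • u) (1/b)) = ENNReal.ofReal ((1/b)^n) * V := by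
    rw [Measure.addHaar_closedBall _ _ (by positivity : (0:ℝ) ≤ 1/b), hfr]
  have hvolS : volume (Metric.closedBall z ((1/4) * (1/b)))
      = ENNReal.ofReal (((1/4) * (1/b))^n) * V := by
    rw [Measure.addHaar_closedBall _ _ (by positivity : (0:ℝ) ≤ (1/4) * (1/b)), hfr]
  -- upper bound for γ(B)
  have hB_upper : gaussMeasure n (Metric.closedBall (b • u) (1/b))
      ≤ ENNReal.ofReal M * volume (Metric.closedBall (b • u) (1/b)) := by
    rw [happ _ measurableSet_closedBall]
    calc ∫⁻ x in Metric.closedBall (b • u) (1/b), ENNReal.ofReal (gaussDensity n x)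
        ≤ ∫⁻ _ in Metric.closedBall (b • u) (1/b), ENNReal.ofReal M := by
          apply setLIntegral_mono measurable_const
          intro x hx
          apply ENNReal.ofReal_le_ofReal
          rw [Metric.mem_closedBall, dist_eq_norm] at hx
          have hbu : ‖b • u‖ = b := by
            rw [norm_smul, Real.norm_eq_abs, hu, mul_one, abs_of_pos hb0]
          have h1 : ‖b • u‖ - ‖x‖ ≤ ‖x - b • u‖ := by
            rw [norm_sub_rev]; exact norm_sub_norm_le _ _
          have hx1 : b - 1/b ≤ ‖x‖ := by rw [hbu] at h1; linarith
          have hx0 : 0 ≤ b - 1/b := by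
            rw [sub_nonneg, div_le_iff₀ hb0]; nlinarith
          unfold gaussDensity
          rw [hMdef]
          apply mul_le_mul_of_nonneg_left _ (by positivity)
          apply Real.exp_le_exp.mpr
          have : (b - 1/b)^2 ≤ ‖x‖^2 := by nlinarith [norm_nonneg x]
          linarith
      _ = ENNReal.ofReal M * volume (Metric.closedBall (b • u) (1/b)) :=
          setLIntegral_const _ _
  -- lower bound for γ(small ball)
  have hS_lower : ENNReal.ofReal m * volume (Metric.closedBall z ((1/4) * (1/b)))
      ≤ gaussMeasure n (Metric.closedBall z ((1/4) * (1/b))) := by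
    rw [happ _ measurableSet_closedBall]
    calc ENNReal.ofReal m * volume (Metric.closedBall z ((1/4) * (1/b)))
        = ∫⁻ _ in Metric.closedBall z ((1/4) * (1/b)), ENNReal.ofReal m :=
          (setLIntegral_const _ _).symm
      _ ≤ ∫⁻ x in Metric.closedBall z ((1/4) * (1/b)), ENNReal.ofReal (gaussDensity n x) := by
          apply setLIntegral_mono hmeas
          intro x hx
          apply ENNReal.ofReal_le_ofReal
          rw [Metric.mem_closedBall, dist_eq_norm] at hx
          have hznorm : ‖z‖ = b + 1/(4*b) := by
            rw [hzdef, norm_smul, Real.norm_eq_abs, hu, mul_one,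
              abs_of_pos (by positivity)]
          have h1 : ‖x‖ - ‖z‖ ≤ ‖x - z‖ := norm_sub_norm_le _ _
          have hx1 : ‖x‖ ≤ b + 1/(2*b) := by
            rw [hznorm] at h1
            have h14 : (1/4 : ℝ) * (1/b) = 1/(4*b) := by ring
            rw [h14] at hx
            linarith
          unfold gaussDensity
          rw [hmdef]
          apply mul_le_mul_of_nonneg_left _ (by positivity)
          apply Real.exp_le_exp.mpr
          have : ‖x‖^2 ≤ (b + 1/(2*b))^2 := by nlinarith [norm_nonneg x]
          linarith
  -- key real inequality
  have hbinv : b * (1/b) = 1 := by field_simp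
  have hexp : Real.exp (-(13/4)) * Real.exp (-(b - 1/b)^2)
      ≤ Real.exp (-(b + 1/(2*b))^2) := by
    rw [← Real.exp_add, Real.exp_le_exp]
    have h12 : 1/(2*b) = (1/b)/2 := by field_simp
    nlinarith [hbinv, h12, sq_nonneg (1/b)]
  have hreal : (Real.exp (-(13/4)) * (1/4)^n) * M * (1/b)^n ≤ m * ((1/4) * (1/b))^n := by
    rw [mul_pow, hMdef, hmdef]
    calc (Real.exp (-(13/4)) * (1/4)^n) * (Real.pi ^ (-(n : ℝ) / 2)
            * Real.exp (-(b - 1/b)^2)) * (1/b)^n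
        = (Real.pi ^ (-(n : ℝ) / 2) * ((1/4:ℝ)^n * (1/b)^n))
            * (Real.exp (-(13/4)) * Real.exp (-(b - 1/b)^2)) := by ring
      _ ≤ (Real.pi ^ (-(n : ℝ) / 2) * ((1/4:ℝ)^n * (1/b)^n))
            * Real.exp (-(b + 1/(2*b))^2) := by
          apply mul_le_mul_of_nonneg_left hexp (by positivity)
      _ = Real.pi ^ (-(n : ℝ) / 2) * Real.exp (-(b + 1/(2*b))^2)
            * ((1/4:ℝ)^n * (1/b)^n) := by ring
  -- assemble
  calc ENNReal.ofReal (Real.exp (-(13/4)) * (1/4)^n)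
        * gaussMeasure n (Metric.closedBall (b • u) (1/b))
      ≤ ENNReal.ofReal (Real.exp (-(13/4)) * (1/4)^n)
          * (ENNReal.ofReal M * volume (Metric.closedBall (b • u) (1/b))) :=
        mul_le_mul_right hB_upper _
    _ = ENNReal.ofReal ((Real.exp (-(13/4)) * (1/4)^n) * M * (1/b)^n) * V := by
        rw [hvolB, ← mul_assoc, ← mul_assoc, ← ENNReal.ofReal_mul (by positivity),
          ← ENNReal.ofReal_mul (by positivity)]
    _ ≤ ENNReal.ofReal (m * ((1/4) * (1/b))^n) * V :=
        mul_le_mul_left (ENNReal.ofReal_le_ofReal hreal) V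
    _ = ENNReal.ofReal m * volume (Metric.closedBall z ((1/4) * (1/b))) := by
        rw [hvolS, ENNReal.ofReal_mul hm0.le, mul_assoc]
    _ ≤ gaussMeasure n (Metric.closedBall z ((1/4) * (1/b))) := hS_lower
    _ ≤ gaussMeasure n (Metric.closedBall (b • u) (1 / b)
          ∩ Metric.closedBall (b' • u) (1 / b')) := measure_mono hsub
end
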